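/- For every type expression A, the following four conditions are equivalent: (a) A ∈ TF (where TF = TF^∅); (b) A is tail finite; (c) A ≁ ⊤, i.e., neither A ≅ ⊤ nor A ≃ ⊤ holds; (d) A is not a ⊤-variant. -/

import Mathlib

namespace LambdaA

/-! ### Type expressions (de Bruijn representation for `μ`-binders) -/

inductive Ty : Type
  | var : ℕ → Ty
  | arrow : Ty → Ty → Ty
  | box : Ty → Ty
  | mu : Ty → Ty
  deriving DecidableEq

namespace Ty

def rename : (ℕ → ℕ) → Ty → Ty
  | f, var n => var (f n)
  | f, arrow A B => arrow (rename f A) (rename f B)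
  | f, box A => box (rename f A)
  | f, mu A => mu (rename (fun n => match n with | 0 => 0 | Nat.succ m => f m + 1) A)

def shiftUp : Ty → Ty := rename Nat.succ

def subst : (ℕ → Ty) → Ty → Ty
  | σ, var n => σ n
  | σ, arrow A B => arrow (subst σ A) (subst σ B)
  | σ, box A => box (subst σ A)
  | σ, mu A => mu (subst (fun n => match n with | 0 => var 0 | Nat.succ m => shiftUp (σ m)) A)

end Ty

/-- `openT A B`: instantiate the outermost bound variable (index `0`) of the body `A` by `B`. -/
def openT (A B : Ty) : Ty :=
  Ty.subst (fun n => match n with | 0 => B | Nat.succ m => Ty.var m) A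

/-- `substFree A X B` is the capture-avoiding substitution `A[B/X]` for the free variable `X`. -/
def substFree (A : Ty) (X : ℕ) (B : Ty) : Ty :=
  Ty.subst (fun n => if n = X then B else Ty.var n) A

/-- The unfolding `μX.A ↦ A[μX.A/X]` of a recursive type. -/
def unfoldMu (A : Ty) : Ty := openT A (Ty.mu A)

/-- Free occurrence of a type variable in a type expression. -/
def freeInTy : ℕ → Ty → Prop
  | X, .var n => n = X
  | X, .arrow A B => freeInTy X A ∨ freeInTy X B
  | X, .box A => freeInTy X A
  | X, .mu A => freeInTy (X + 1) A

/-- Auxiliary ⊤-variant test.  `tvAux A d t` scans the tail of `A`, where `d` is the number of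
`μ`-binders passed so far and `t` is the number of (outermost) such binders inside which a `•`
has already been encountered.  A variable qualifies iff it is bound by one of the `μ`-binders
and at least one `•` occurs inside that binder. -/
def tvAux : Ty → ℕ → ℕ → Bool
  | .var j, d, t => decide (d - t ≤ j ∧ j < d)
  | .box A, d, _ => tvAux A d d
  | .mu A, d, t => tvAux A (d + 1) t
  | .arrow _ B, d, t => tvAux B d t

/-- `A` is a ⊤-variant. -/
def IsTV (A : Ty) : Prop := tvAux A 0 0 = true

/-- `Proper A X` : the type expression `A` is proper in the (free) variable `X`. -/
def Proper : Ty → ℕ → Prop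
  | .var n, X => n ≠ X
  | .box _, _ => True
  | .arrow A B, X => (Proper A X ∧ Proper B X) ∨ IsTV B
  | .mu A, X => Proper A (X + 1) ∨ IsTV (.mu A)

/-- Well-formed type expressions: every recursive type `μX.A` has `A` proper in `X`. -/
def WF : Ty → Prop
  | .var _ => True
  | .arrow A B => WF A ∧ WF B
  | .box A => WF A
  | .mu A => WF A ∧ Proper A 0

/-- `⊤ = μX.•X`. -/
def tyTop : Ty := .mu (.box (.var 0))

/-- `•ⁿ A`. -/
def boxN (n : ℕ) (A : Ty) : Ty := Ty.box^[n] A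

/-- The equivalences `≅` (`s = false`) and `≃` (`s = true`) on type expressions. -/
inductive TyEq : Bool → Ty → Ty → Prop
  | refl (s : Bool) (A : Ty) : TyEq s A A
  | symm {s : Bool} {A B : Ty} : TyEq s A B → TyEq s B A
  | trans {s : Bool} {A B C : Ty} : TyEq s A B → TyEq s B C → TyEq s A C
  | boxCongr {s : Bool} {A B : Ty} : TyEq s A B → TyEq s (.box A) (.box B)
  | arrowCongr {s : Bool} {A B C D : Ty} :
      TyEq s A C → TyEq s B D → TyEq s (.arrow A B) (.arrow C D)
  | arrowTop (s : Bool) (A : Ty) : TyEq s (.arrow A tyTop) tyTop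
  | fix (s : Bool) (A : Ty) : TyEq s (.mu A) (unfoldMu A)
  | uniq {s : Bool} {A C : Ty} : TyEq s A (openT C A) → Proper C 0 → TyEq s A (.mu C)
  | kl (A B : Ty) : TyEq true (.box (.arrow A B)) (.arrow (.box A) (.box B))

/-! ### Subtyping -/

/-- Subtyping assumptions: finite sets of pairs of type variables. -/
abbrev Assum := Finset (ℕ × ℕ)

/-- Well-formedness of a subtyping assumption: every type variable occurs at most once. -/
def AssumOK (γ : Assum) : Prop :=
  (∀ p ∈ γ, (p : ℕ × ℕ).1 ≠ p.2) ∧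
    ∀ p ∈ γ, ∀ q ∈ γ, p ≠ q →
      (p : ℕ × ℕ).1 ≠ (q : ℕ × ℕ).1 ∧ p.1 ≠ q.2 ∧ p.2 ≠ q.1 ∧ p.2 ≠ q.2

/-- `X` occurs in the subtyping assumption `γ`. -/
def AssumVar (γ : Assum) (X : ℕ) : Prop :=
  ∃ p ∈ γ, (p : ℕ × ℕ).1 = X ∨ (p : ℕ × ℕ).2 = X

/-- Derivability of subtyping judgments `γ ⊢ A ⪯ B`. -/
inductive Sub : Assum → Ty → Ty → Prop
  | assump {γ : Assum} {X Y : ℕ} : AssumOK γ → (X, Y) ∈ γ → Sub γ (.var X) (.var Y)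
  | top {γ : Assum} (A : Ty) : AssumOK γ → Sub γ A tyTop
  | refl {γ : Assum} {A B : Ty} : AssumOK γ → TyEq true A B → Sub γ A B
  | trans {γ₁ γ₂ : Assum} {A B C : Ty} :
      Sub γ₁ A B → Sub γ₂ B C → AssumOK (γ₁ ∪ γ₂) → Sub (γ₁ ∪ γ₂) A C
  | boxMono {γ : Assum} {A B : Ty} : Sub γ A B → Sub γ (.box A) (.box B)
  | arrowMono {γ₁ γ₂ : Assum} {A A' B B' : Ty} :
      Sub γ₁ A' A → Sub γ₂ B B' → AssumOK (γ₁ ∪ γ₂) →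
      Sub (γ₁ ∪ γ₂) (.arrow A B) (.arrow A' B')
  | muMono {γ : Assum} {X Y : ℕ} {A B : Ty} :
      AssumOK (insert (X, Y) γ) →
      Sub (insert (X, Y) γ) (openT A (.var X)) (openT B (.var Y)) →
      ¬ AssumVar γ X → ¬ AssumVar γ Y →
      ¬ freeInTy X (openT B (.var Y)) → ¬ freeInTy Y (openT A (.var X)) →
      Proper (openT A (.var X)) X → Proper (openT B (.var Y)) Y →
      Sub γ (.mu A) (.mu B)
  | approx {γ : Assum} (A : Ty) : AssumOK γ → Sub γ A (.box A)

/-! ### Untyped λ-terms (locally-nameless representation) -/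

inductive Tm : Type
  | bvar : ℕ → Tm
  | fvar : ℕ → Tm
  | lam : Tm → Tm
  | app : Tm → Tm → Tm
  deriving DecidableEq

def openTmAux (N : Tm) : ℕ → Tm → Tm
  | _, .fvar y => .fvar y
  | k, .bvar i => if i = k then N else .bvar i
  | k, .lam M => .lam (openTmAux N (k + 1) M)
  | k, .app M₁ M₂ => .app (openTmAux N k M₁) (openTmAux N k M₂)

/-- Instantiate the outermost bound variable of the body `M` by `N`. -/
def openTm (M N : Tm) : Tm := openTmAux N 0 M

/-- `substTm M x N` is the substitution `M[N/x]` for the free variable `x`. -/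
def substTm : Tm → ℕ → Tm → Tm
  | .bvar i, _, _ => .bvar i
  | .fvar y, x, N => if y = x then N else .fvar y
  | .lam M, x, N => .lam (substTm M x N)
  | .app M₁ M₂, x, N => .app (substTm M₁ x N) (substTm M₂ x N)

/-- Free occurrence of an individual variable in a λ-term. -/
def freeTm : ℕ → Tm → Prop
  | _, .bvar _ => False
  | x, .fvar y => y = x
  | x, .lam M => freeTm x M
  | x, .app M₁ M₂ => freeTm x M₁ ∨ freeTm x M₂

/-- One-step β-reduction. -/
inductive Step : Tm → Tm → Prop
  | beta (M N : Tm) : Step (.app (.lam M) N) (openTm M N)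
  | appL {M M' : Tm} (N : Tm) : Step M M' → Step (.app M N) (.app M' N)
  | appR (M : Tm) {N N' : Tm} : Step N N' → Step (.app M N) (.app M N')
  | lamCongr {M M' : Tm} : Step M M' → Step (.lam M) (.lam M')

/-- `→*β`, the reflexive-transitive closure of β-reduction. -/
def Steps : Tm → Tm → Prop := Relation.ReflTransGen Step

/-- β-convertibility `=β`. -/
inductive BetaEq : Tm → Tm → Prop
  | step {M N : Tm} : Step M N → BetaEq M N
  | refl (M : Tm) : BetaEq M M
  | symm {M N : Tm} : BetaEq M N → BetaEq N M
  | trans {M N K : Tm} : BetaEq M N → BetaEq N K → BetaEq M K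

/-! ### Typing -/

/-- Typing contexts: finite sets of (variable, type) pairs. -/
abbrev Ctx := Finset (ℕ × Ty)

/-- Well-formedness of a typing context (functionality). -/
def CtxOK (Γ : Ctx) : Prop :=
  ∀ p ∈ Γ, ∀ q ∈ Γ, (p : ℕ × Ty).1 = (q : ℕ × Ty).1 → p = q

/-- `•Γ`. -/
def boxCtx (Γ : Ctx) : Ctx := Γ.image fun p => (p.1, Ty.box p.2)

/-- All types in the context are well-formed type expressions. -/
def CtxWF (Γ : Ctx) : Prop := ∀ p ∈ Γ, WF (p : ℕ × Ty).2

/-- The typing system λA. -/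
inductive Typing : Ctx → Tm → Ty → Prop
  | var {Γ : Ctx} {x : ℕ} {A : Ty} : CtxOK Γ → (x, A) ∈ Γ → Typing Γ (.fvar x) A
  | shift {Γ : Ctx} {M : Tm} {A : Ty} : Typing (boxCtx Γ) M (.box A) → Typing Γ M A
  | top {Γ : Ctx} (M : Tm) : CtxOK Γ → Typing Γ M tyTop
  | sub {Γ : Ctx} {M : Tm} {A B : Ty} : Typing Γ M A → Sub ∅ A B → Typing Γ M B
  | lamI {Γ : Ctx} {x : ℕ} {A B : Ty} {M : Tm} :
      ¬ freeTm x M →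
      Typing (insert (x, A) Γ) (openTm M (.fvar x)) B →
      Typing Γ (.lam M) (.arrow A B)
  | appE {Γ₁ Γ₂ : Ctx} {M N : Tm} {A B : Ty} :
      Typing Γ₁ M (.arrow A B) → Typing Γ₂ N A → CtxOK (Γ₁ ∪ Γ₂) →
      Typing (Γ₁ ∪ Γ₂) (.app M N) B

/-! ### Frames, λ-algebras and the semantics of types -/

/-- The accessibility relation is conversely well-founded. -/
def ConverselyWF {W : Type*} (acc : W → W → Prop) : Prop :=
  WellFounded fun q p => acc p q

/-- Local linearity of the accessibility relation. -/
def LocallyLinear {W : Type*} (acc : W → W → Prop) : Prop :=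
  ∀ p q, acc p q → ∃ r, Relation.ReflTransGen acc p r ∧ acc r q ∧
    ∀ s, acc r s → Relation.ReflTransGen acc q s

/-- Hereditary type environments. -/
def Hereditary {W : Type*} {V : Type*} (acc : W → W → Prop) (η : ℕ → W → Set V) : Prop :=
  ∀ X p q, acc p q → η X p ⊆ η X q

/-- Syntactical λ-algebras of the untyped λ-calculus. -/
structure LambdaAlgebra (V : Type*) where
  nonempty : Nonempty V
  ap : V → V → V
  den : Tm → (ℕ → V) → V
  den_fvar : ∀ x ρ, den (.fvar x) ρ = ρ x
  den_app : ∀ M N ρ, den (.app M N) ρ = ap (den M ρ) (den N ρ)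
  den_lam : ∀ M x ρ v, ¬ freeTm x M →
    ap (den (.lam M) ρ) v = den (openTm M (.fvar x)) (Function.update ρ x v)
  den_ext : ∀ M ρ ρ', (∀ x, freeTm x M → ρ x = ρ' x) → den M ρ = den M ρ'
  den_beta : ∀ M N ρ, BetaEq M N → den M ρ = den N ρ

/-- The interpretation `I(A)^η_p` of type expressions over a frame, packaged together with
its defining (recursion) equations. -/
structure Interp (W : Type*) (acc : W → W → Prop) (V : Type*) (ap : V → V → V) where
  I : Ty → (ℕ → W → Set V) → W → Set V
  I_tv : ∀ A η p, WF A → IsTV A → I A η p = Set.univ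
  I_var : ∀ X η p, I (.var X) η p = η X p
  I_box : ∀ A η p, WF A → ¬ IsTV (Ty.box A) →
    I (.box A) η p = {u | ∀ q, acc p q → u ∈ I A η q}
  I_arrow : ∀ A B η p, WF A → WF B → ¬ IsTV (Ty.arrow A B) →
    I (.arrow A B) η p =
      {u | ∀ q, Relation.ReflTransGen acc p q → ∀ v ∈ I A η q, ap u v ∈ I B η q}
  I_mu : ∀ A η p, WF (Ty.mu A) → ¬ IsTV (Ty.mu A) →
    I (.mu A) η p = I (unfoldMu A) η p

/-! ### Tail finiteness and related notions -/

/-- The sets `TF^V`. -/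
inductive TFmem : Set ℕ → Ty → Prop
  | var {V : Set ℕ} {X : ℕ} : X ∉ V → TFmem V (.var X)
  | box {V : Set ℕ} {A : Ty} : TFmem V A → TFmem V (.box A)
  | arrow {V : Set ℕ} (A : Ty) {B : Ty} : TFmem V B → TFmem V (.arrow A B)
  | mu {V : Set ℕ} {A : Ty} : WF (.mu A) → TFmem ({0} ∪ (Nat.succ '' V)) A → TFmem V (.mu A)

/-- Shapes `•^{m₀}(B₁ → •^{m₁}(B₂ → ⋯ → •^{m_{n-1}}(Bₙ → •^{mₙ} X)⋯))`. -/
inductive TFShape : Ty → Prop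
  | var (X : ℕ) : TFShape (.var X)
  | box {A : Ty} : TFShape A → TFShape (.box A)
  | arrow (A : Ty) {B : Ty} : TFShape B → TFShape (.arrow A B)

/-- Tail finite type expressions. -/
def TailFinite (A : Ty) : Prop := ∃ C, TFShape C ∧ WF C ∧ TyEq false A C

-- Effectively occurring type variables, positively (`petv`) and negatively (`netv`).
mutual
  def petv : Ty → Finset ℕ
    | .var X => {X}
    | .box A => if tvAux (.box A) 0 0 then ∅ else petv A
    | .arrow A B => if tvAux (.arrow A B) 0 0 then ∅ else netv A ∪ petv B
    | .mu A =>
        if tvAux (.mu A) 0 0 then ∅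
        else if 0 ∈ netv A then ((petv A ∪ netv A).erase 0).image (· - 1)
        else ((petv A).erase 0).image (· - 1)
  def netv : Ty → Finset ℕ
    | .var _ => ∅
    | .box A => if tvAux (.box A) 0 0 then ∅ else netv A
    | .arrow A B => if tvAux (.arrow A B) 0 0 then ∅ else petv A ∪ netv B
    | .mu A =>
        if tvAux (.mu A) 0 0 then ∅
        else if 0 ∈ netv A then ((netv A ∪ petv A).erase 0).image (· - 1)
        else ((netv A).erase 0).image (· - 1)
end

/-- Positively finite type expressions. -/
def PosFin (A : Ty) : Prop :=
  ∀ (s : Bool) (B C : Ty) (X : ℕ), WF B → WF C →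
    TyEq s A (substFree B X C) → X ∈ petv B → X ∉ netv B → TailFinite C

/-- Negatively finite type expressions. -/
def NegFin (A : Ty) : Prop :=
  ∀ (s : Bool) (B C : Ty) (X : ℕ), WF B → WF C →
    TyEq s A (substFree B X C) → X ∈ netv B → X ∉ petv B → TailFinite C

/-! ### Head normal forms, maximality, normal forms -/

/-- `y N₁ … Nₙ` with every argument satisfying `P`. -/
inductive SpineArgs (P : Tm → Prop) : Tm → Prop
  | fvar (x : ℕ) : SpineArgs P (.fvar x)
  | bvar (i : ℕ) : SpineArgs P (.bvar i)
  | app {M N : Tm} : SpineArgs P M → P N → SpineArgs P (.app M N)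

/-- Head normal forms `λx₁…λxₘ. y N₁ … Nₙ` whose arguments satisfy `P`. -/
inductive HNFP (P : Tm → Prop) : Tm → Prop
  | spine {M : Tm} : SpineArgs P M → HNFP P M
  | lam {M : Tm} : HNFP P M → HNFP P (.lam M)

/-- Head normal forms. -/
def HNF : Tm → Prop := HNFP fun _ => True

/-- Maximality at a given depth. -/
def MaxAt : ℕ → Tm → Prop
  | 0, _ => True
  | n + 1, M => ∃ M', Steps M M' ∧ HNFP (MaxAt n) M'

/-- Maximal λ-terms: the Böhm tree contains no `⊥`. -/
def Maximal (M : Tm) : Prop := ∀ n, MaxAt n M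

/-- β-normal forms. -/
def NormalForm (M : Tm) : Prop := ∀ N, ¬ Step M N

/-- Type expressions without any occurrence of the modal operator `•`. -/
def NoBox : Ty → Prop
  | .var _ => True
  | .arrow A B => NoBox A ∧ NoBox B
  | .box _ => False
  | .mu A => NoBox A

/-! ### The modal logic LAμ and its Kripke semantics -/

/-- The logic LAμ (formulae are type expressions). -/
inductive LAmu : Finset Ty → Ty → Prop
  | assump {Γ : Finset Ty} {A : Ty} : LAmu (insert A Γ) A
  | nec {Γ₁ : Finset Ty} (Γ₂ : Finset Ty) {A : Ty} :
      LAmu Γ₁ A → LAmu (Γ₁.image Ty.box ∪ Γ₂) (.box A)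
  | four {Γ : Finset Ty} {A : Ty} : LAmu Γ (.box A) → LAmu Γ (.box (.box A))
  | impI {Γ : Finset Ty} {A B : Ty} : LAmu (insert A Γ) B → LAmu Γ (.arrow A B)
  | impE {Γ₁ Γ₂ : Finset Ty} {A B : Ty} :
      LAmu Γ₁ (.arrow A B) → LAmu Γ₂ A → LAmu (Γ₁ ∪ Γ₂) B
  | fold {Γ : Finset Ty} {A : Ty} : LAmu Γ (unfoldMu A) → LAmu Γ (.mu A)
  | unfold {Γ : Finset Ty} {A : Ty} : LAmu Γ (.mu A) → LAmu Γ (unfoldMu A)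
  | lrule {Γ : Finset Ty} {A B : Ty} :
      LAmu Γ (.arrow (.box A) (.box B)) → LAmu Γ (.box (.arrow A B))
  | approx {Γ : Finset Ty} {A : Ty} : LAmu Γ A → LAmu Γ (.box A)

/-- The Kripke satisfaction relation over an LA-frame `(W, tri, R)` under a valuation `ξ`,
packaged with its defining (recursion) equations. -/
structure SatFun {W : Type*} (tri R : W → W → Prop) (ξ : ℕ → W → Prop) where
  sat : Ty → W → Prop
  sat_tv : ∀ A p, WF A → IsTV A → sat A p
  sat_var : ∀ X p, sat (.var X) p ↔ ξ X p
  sat_box : ∀ A p, WF A → ¬ IsTV (Ty.box A) →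
    (sat (.box A) p ↔ ∀ q, tri p q → sat A q)
  sat_arrow : ∀ A B p, WF A → WF B → ¬ IsTV (Ty.arrow A B) →
    (sat (.arrow A B) p ↔ ∀ q, R p q → sat A q → sat B q)
  sat_mu : ∀ A p, WF (Ty.mu A) → ¬ IsTV (Ty.mu A) →
    (sat (.mu A) p ↔ sat (unfoldMu A) p)

section Dev
open Ty

/-- lift of a renaming under a binder -/
def rlift (f : ℕ → ℕ) : ℕ → ℕ := fun n => match n with | 0 => 0 | Nat.succ m => f m + 1

/-- lift of a substitution under a binder -/
def slift (σ : ℕ → Ty) : ℕ → Ty :=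
  fun n => match n with | 0 => Ty.var 0 | Nat.succ m => Ty.shiftUp (σ m)

theorem rename_mu (f : ℕ → ℕ) (A : Ty) : rename f (Ty.mu A) = Ty.mu (rename (rlift f) A) := rfl

theorem subst_mu (σ : ℕ → Ty) (A : Ty) : subst σ (Ty.mu A) = Ty.mu (subst (slift σ) A) := rfl

theorem rename_rename (f g : ℕ → ℕ) (A : Ty) :
    rename f (rename g A) = rename (fun n => f (g n)) A := by
  induction A generalizing f g with
  | var n => rfl
  | arrow A B ihA ihB => simp [rename, ihA, ihB]
  | box A ih => simp [rename, ih]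
  | mu A ih =>
    show Ty.mu (rename (rlift f) (rename (rlift g) A)) = Ty.mu (rename (rlift fun n => f (g n)) A)
    rw [ih]
    congr 1
    congr 1
    funext n
    cases n <;> rfl

theorem subst_rename (σ : ℕ → Ty) (f : ℕ → ℕ) (A : Ty) :
    subst σ (rename f A) = subst (fun n => σ (f n)) A := by
  induction A generalizing σ f with
  | var n => rfl
  | arrow A B ihA ihB => simp [rename, subst, ihA, ihB]
  | box A ih => simp [rename, subst, ih]
  | mu A ih =>
    show Ty.mu (subst (slift σ) (rename (rlift f) A)) = Ty.mu (subst (slift fun n => σ (f n)) A)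
    rw [ih]
    congr 1
    congr 1
    funext n
    cases n <;> rfl

theorem rename_subst (f : ℕ → ℕ) (σ : ℕ → Ty) (A : Ty) :
    rename f (subst σ A) = subst (fun n => rename f (σ n)) A := by
  induction A generalizing σ f with
  | var n => rfl
  | arrow A B ihA ihB => simp [rename, subst, ihA, ihB]
  | box A ih => simp [rename, subst, ih]
  | mu A ih =>
    show Ty.mu (rename (rlift f) (subst (slift σ) A)) = Ty.mu (subst (slift fun n => rename f (σ n)) A)
    rw [ih]
    congr 1
    congr 1
    funext n
    cases n with
    | zero => rfl
    | succ m =>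
      show rename (rlift f) (Ty.shiftUp (σ m)) = Ty.shiftUp (rename f (σ m))
      unfold Ty.shiftUp
      rw [rename_rename, rename_rename]
      rfl

theorem subst_subst (σ τ : ℕ → Ty) (A : Ty) :
    subst σ (subst τ A) = subst (fun n => subst σ (τ n)) A := by
  induction A generalizing σ τ with
  | var n => rfl
  | arrow A B ihA ihB => simp [subst, ihA, ihB]
  | box A ih => simp [subst, ih]
  | mu A ih =>
    show Ty.mu (subst (slift σ) (subst (slift τ) A)) = Ty.mu (subst (slift fun n => subst σ (τ n)) A)
    rw [ih]
    congr 1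
    congr 1
    funext n
    cases n with
    | zero => rfl
    | succ m =>
      show subst (slift σ) (Ty.shiftUp (τ m)) = Ty.shiftUp (subst σ (τ m))
      unfold Ty.shiftUp
      rw [subst_rename, rename_subst]
      rfl

theorem subst_var_id (A : Ty) : subst (fun n => Ty.var n) A = A := by
  induction A with
  | var n => rfl
  | arrow A B ihA ihB => simp [subst, ihA, ihB]
  | box A ih => simp [subst, ih]
  | mu A ih =>
    show Ty.mu (subst (slift fun n => Ty.var n) A) = Ty.mu A
    have : (slift fun n => Ty.var n) = fun n => Ty.var n := by
      funext n; cases n <;> rfl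
    rw [this, ih]

end Dev
/-- Tail analysis: `.inl r` means the tail variable is bound by a spine `μ`-binder
(`r = true` iff a `•` occurs between the variable and its binder); `.inr (s, j)` means
the tail variable is free with (normalized) index `j`. -/
def tb : Ty → Sum Bool (Bool × ℕ)
  | .var j => .inr (false, j)
  | .box A => match tb A with | .inl r => .inl r | .inr (_, j) => .inr (true, j)
  | .arrow _ B => tb B
  | .mu A => match tb A with
      | .inl r => .inl r
      | .inr (s, 0) => .inl s
      | .inr (s, Nat.succ j) => .inr (s, j)

theorem tb_rename (A : Ty) (f : ℕ → ℕ) :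
    tb (Ty.rename f A) =
      match tb A with | .inl r => .inl r | .inr (s, j) => .inr (s, f j) := by
  induction A generalizing f with
  | var j => rfl
  | box A ih =>
    simp only [Ty.rename, tb, ih]
    rcases h : tb A with r | ⟨s, j⟩ <;> rfl
  | arrow A B ihA ihB => exact ihB f
  | mu A ih =>
    rw [rename_mu]
    simp only [tb, ih]
    rcases h : tb A with r | ⟨s, j⟩
    · rfl
    · cases j <;> rfl

theorem tb_subst (A : Ty) (σ : ℕ → Ty) :
    tb (Ty.subst σ A) =
      match tb A with
      | .inl r => .inl r
      | .inr (s, j) =>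
        (match tb (σ j) with
         | .inl r => .inl r
         | .inr (s', j') => .inr (s || s', j')) := by
  induction A generalizing σ with
  | var j =>
    show tb (σ j) = _
    simp only [tb]
    rcases h : tb (σ j) with r | ⟨s', j'⟩ <;> simp
  | box A ih =>
    simp only [Ty.subst, tb, ih]
    rcases h : tb A with r | ⟨s, j⟩
    · rfl
    · rcases h' : tb (σ j) with r' | ⟨s', j'⟩ <;> simp only [h'] <;> rfl
  | arrow A B ihA ihB => exact ihB σ
  | mu A ih =>
    rw [subst_mu]
    simp only [tb, ih]
    rcases h : tb A with r | ⟨s, j⟩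
    · rfl
    · cases j with
      | zero => simp [slift, tb]
      | succ m =>
        simp [slift, Ty.shiftUp, tb_rename]
        rcases h' : tb (σ m) with r' | ⟨s', j'⟩ <;> simp [h']

/-- The tail observation: `some (n, X)` iff the (infinitely unfolded) tail of the type
reaches the free variable `X` after passing `n` boxes. -/
def obs : Ty → Option (ℕ × ℕ)
  | .var j => some (0, j)
  | .box A => (obs A).map (fun p => (p.1 + 1, p.2))
  | .arrow _ B => obs B
  | .mu A => match obs A with
    | some (n, Nat.succ j) => some (n, j)
    | _ => none

theorem obs_rename (A : Ty) (f : ℕ → ℕ) :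
    obs (Ty.rename f A) = (obs A).map (fun p => (p.1, f p.2)) := by
  induction A generalizing f with
  | var j => rfl
  | box A ih =>
    simp only [Ty.rename, obs, ih]
    rcases h : obs A with _ | ⟨n, j⟩ <;> rfl
  | arrow A B ihA ihB => exact ihB f
  | mu A ih =>
    rw [rename_mu]
    simp only [obs, ih]
    rcases h : obs A with _ | ⟨n, j⟩
    · rfl
    · cases j <;> rfl

theorem obs_subst (A : Ty) (σ : ℕ → Ty) :
    obs (Ty.subst σ A) =
      (obs A).bind (fun p => (obs (σ p.2)).map (fun q => (p.1 + q.1, q.2))) := by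
  induction A generalizing σ with
  | var j =>
    show obs (σ j) = _
    simp only [obs]
    rcases h : obs (σ j) with _ | ⟨n, i⟩ <;> simp [h]
  | box A ih =>
    simp only [Ty.subst, obs, ih]
    rcases h : obs A with _ | ⟨n, j⟩
    · rfl
    · rcases h' : obs (σ j) with _ | ⟨n', j'⟩ <;>
        simp only [h', Option.map, Option.bind] <;> simp [Prod.ext_iff] <;> omega
  | arrow A B ihA ihB => exact ihB σ
  | mu A ih =>
    rw [subst_mu]
    simp only [obs, ih]
    rcases h : obs A with _ | ⟨n, j⟩
    · rfl
    · cases j with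
      | zero => simp [slift, obs]
      | succ m =>
        simp [slift, Ty.shiftUp, obs_rename]
        rcases h' : obs (σ m) with _ | ⟨n', j'⟩ <;> simp [h']
theorem tb_obs (A : Ty) :
    (∀ r, tb A = .inl r → obs A = none) ∧
    (∀ s j, tb A = .inr (s, j) → ∃ n, obs A = some (n, j) ∧ (s = true ↔ 1 ≤ n)) := by
  induction A with
  | var j =>
    constructor
    · intro r h; simp [tb] at h
    · intro s i h
      simp only [tb, Sum.inr.injEq, Prod.mk.injEq] at h
      exact ⟨0, by simp [obs, h.1, h.2]⟩
  | box A ih =>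
    constructor
    · intro r h
      simp only [tb] at h
      rcases h' : tb A with r' | ⟨s', j'⟩ <;> simp only [h'] at h
      · simp [obs, ih.1 r' h']
      · simp at h
    · intro s j h
      simp only [tb] at h
      rcases h' : tb A with r' | ⟨s', j'⟩ <;> simp only [h'] at h
      · simp at h
      · obtain ⟨rfl, rfl⟩ : true = s ∧ j' = j := by
          simpa [Sum.inr.injEq, Prod.mk.injEq] using h
        obtain ⟨n, hn, _⟩ := ih.2 s' j' h'
        exact ⟨n + 1, by simp [obs, hn], by simp⟩
  | arrow A B ihA ihB =>
    constructor
    · intro r h; exact ihB.1 r h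
    · intro s j h; exact ihB.2 s j h
  | mu A ih =>
    constructor
    · intro r h
      simp only [tb] at h
      rcases h' : tb A with r' | ⟨s', j'⟩ <;> simp only [h'] at h
      · simp [obs, ih.1 r' h']
      · cases j' with
        | zero =>
          obtain ⟨n, hn, _⟩ := ih.2 s' 0 h'
          simp [obs, hn]
        | succ m => simp at h
    · intro s j h
      simp only [tb] at h
      rcases h' : tb A with r' | ⟨s', j'⟩ <;> simp only [h'] at h
      · simp at h
      · cases j' with
        | zero => simp at h
        | succ m =>
          have hs : s' = s ∧ m = j := by simpa using h
          obtain ⟨n, hn, hsn⟩ := ih.2 s' (m+1) h'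
          exact ⟨n, by simp [obs, hn, hs.2], by rw [← hs.1]; exact hsn⟩

theorem tvAux_iff (A : Ty) : ∀ d t, t ≤ d →
    (tvAux A d t = true ↔
      (match tb A with
       | .inl r => r = true
       | .inr (s, j) => j < d ∧ (s = true ∨ d - t ≤ j))) := by
  induction A with
  | var j =>
    intro d t ht
    simp only [tvAux, tb, decide_eq_true_eq]
    constructor
    · rintro ⟨h1, h2⟩; exact ⟨h2, Or.inr h1⟩
    · rintro ⟨h1, h2 | h2⟩
      · simp at h2
      · exact ⟨h2, h1⟩
  | box A ih =>
    intro d t ht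
    show tvAux A d d = true ↔ _
    rw [ih d d le_rfl]
    simp only [tb]
    rcases h : tb A with r | ⟨s, j⟩
    · rfl
    · constructor
      · rintro ⟨h1, _⟩; exact ⟨h1, Or.inl rfl⟩
      · rintro ⟨h1, _⟩; exact ⟨h1, Or.inr (by omega)⟩
  | arrow A B ihA ihB => intro d t ht; exact ihB d t ht
  | mu A ih =>
    intro d t ht
    show tvAux A (d+1) t = true ↔ _
    rw [ih (d+1) t (by omega)]
    simp only [tb]
    rcases h : tb A with r | ⟨s, j⟩
    · rfl
    · cases j with
      | zero =>
        simp only []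
        constructor
        · rintro ⟨_, h2 | h2⟩
          · exact h2
          · omega
        · intro hs; exact ⟨by omega, Or.inl hs⟩
      | succ m =>
        constructor
        · rintro ⟨h1, h2 | h2⟩
          · exact ⟨by omega, Or.inl h2⟩
          · exact ⟨by omega, Or.inr (by omega)⟩
        · rintro ⟨h1, h2 | h2⟩
          · exact ⟨by omega, Or.inl h2⟩
          · exact ⟨by omega, Or.inr (by omega)⟩

theorem isTV_iff (A : Ty) : IsTV A ↔ tb A = .inl true := by
  unfold IsTV
  rw [tvAux_iff A 0 0 le_rfl]
  rcases h : tb A with r | ⟨s, j⟩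
  · simp
  · simp only []
    constructor
    · rintro ⟨h1, _⟩; omega
    · intro h'; simp at h'

theorem obs_top : obs tyTop = none := rfl

theorem isTV_top : IsTV tyTop := by rw [isTV_iff]; rfl

theorem isTV_subst {A : Ty} (σ : ℕ → Ty) (h : IsTV A) : IsTV (Ty.subst σ A) := by
  rw [isTV_iff] at h ⊢
  rw [tb_subst, h]

theorem isTV_rename {A : Ty} (f : ℕ → ℕ) (h : IsTV A) : IsTV (Ty.rename f A) := by
  rw [isTV_iff] at h ⊢
  rw [tb_rename, h]

theorem free_rename {A : Ty} {f : ℕ → ℕ} {X : ℕ} (h : freeInTy X (Ty.rename f A)) :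
    ∃ Y, freeInTy Y A ∧ f Y = X := by
  induction A generalizing f X with
  | var n => exact ⟨n, rfl, h⟩
  | box A ih => exact ih h
  | arrow A B ihA ihB =>
    rcases h with h | h
    · obtain ⟨Y, h1, h2⟩ := ihA h; exact ⟨Y, Or.inl h1, h2⟩
    · obtain ⟨Y, h1, h2⟩ := ihB h; exact ⟨Y, Or.inr h1, h2⟩
  | mu A ih =>
    rw [rename_mu] at h
    obtain ⟨Y, h1, h2⟩ := ih (f := rlift f) h
    cases Y with
    | zero => simp [rlift] at h2
    | succ m =>
      refine ⟨m, h1, ?_⟩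
      simp only [rlift] at h2
      omega

theorem not_free_shiftUp_zero (T : Ty) : ¬ freeInTy 0 (Ty.shiftUp T) := by
  intro h
  obtain ⟨Y, _, h2⟩ := free_rename h
  exact Nat.succ_ne_zero Y h2

theorem not_free_shiftUp_succ {T : Ty} {X : ℕ} (h : ¬ freeInTy X T) :
    ¬ freeInTy (X + 1) (Ty.shiftUp T) := by
  intro hf
  obtain ⟨Y, h1, h2⟩ := free_rename hf
  obtain rfl : Y = X := by omega
  exact h h1

theorem proper_of_not_free {A : Ty} : ∀ {X : ℕ}, ¬ freeInTy X A → Proper A X := by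
  induction A with
  | var n => intro X h; exact fun hn => h hn
  | box A ih => intro X h; trivial
  | arrow A B ihA ihB =>
    intro X h
    simp only [freeInTy, not_or] at h
    exact Or.inl ⟨ihA h.1, ihB h.2⟩
  | mu A ih =>
    intro X h
    exact Or.inl (ih h)

theorem rlift_inj {f : ℕ → ℕ} (hf : Function.Injective f) : Function.Injective (rlift f) := by
  intro a b hab
  cases a with
  | zero =>
    cases b with
    | zero => rfl
    | succ m => exact absurd hab (by simp [rlift])
  | succ n =>
    cases b with
    | zero => exact absurd hab (by simp [rlift])
    | succ m =>
      simp only [rlift] at hab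
      exact congrArg Nat.succ (hf (by omega))

theorem proper_rename {A : Ty} : ∀ {f : ℕ → ℕ} {X : ℕ}, Function.Injective f →
    Proper A X → Proper (Ty.rename f A) (f X) := by
  induction A with
  | var n => intro f X hf h hn; exact h (hf hn)
  | box A ih => intro f X hf h; trivial
  | arrow A B ihA ihB =>
    intro f X hf h
    rcases h with ⟨h1, h2⟩ | h
    · exact Or.inl ⟨ihA hf h1, ihB hf h2⟩
    · exact Or.inr (isTV_rename f h)
  | mu A ih =>
    intro f X hf h
    rw [rename_mu]
    rcases h with h | h
    · refine Or.inl ?_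
      have := ih (rlift_inj hf) h
      simpa [rlift] using this
    · exact Or.inr (by rw [← rename_mu]; exact isTV_rename f h)

theorem wf_rename {A : Ty} : ∀ {f : ℕ → ℕ}, Function.Injective f →
    WF A → WF (Ty.rename f A) := by
  induction A with
  | var n => intro f _ _; trivial
  | box A ih => intro f hf h; exact ih hf h
  | arrow A B ihA ihB => intro f hf h; exact ⟨ihA hf h.1, ihB hf h.2⟩
  | mu A ih =>
    intro f hf h
    rw [rename_mu]
    refine ⟨ih (rlift_inj hf) h.1, ?_⟩
    have := proper_rename (rlift_inj hf) h.2
    simpa [rlift] using this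

theorem proper_subst {A : Ty} : ∀ {σ : ℕ → Ty} {X : ℕ},
    σ X = Ty.var X → (∀ k, k ≠ X → ¬ freeInTy X (σ k)) →
    Proper A X → Proper (Ty.subst σ A) X := by
  induction A with
  | var n =>
    intro σ X h1 h2 h
    exact proper_of_not_free (h2 n h)
  | box A ih => intro σ X _ _ _; trivial
  | arrow A B ihA ihB =>
    intro σ X h1 h2 h
    rcases h with ⟨ha, hb⟩ | h
    · exact Or.inl ⟨ihA h1 h2 ha, ihB h1 h2 hb⟩
    · exact Or.inr (isTV_subst σ h)
  | mu A ih =>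
    intro σ X h1 h2 h
    rw [subst_mu]
    rcases h with h | h
    · refine Or.inl (ih ?_ ?_ h)
      · show Ty.shiftUp (σ X) = Ty.var (X + 1)
        rw [h1]; rfl
      · intro k hk
        cases k with
        | zero => intro hf; exact Nat.succ_ne_zero X (hf : 0 = X + 1).symm
        | succ m =>
          show ¬ freeInTy (X + 1) (Ty.shiftUp (σ m))
          exact not_free_shiftUp_succ (h2 m (by omega))
    · exact Or.inr (by rw [← subst_mu]; exact isTV_subst σ h)

theorem wf_subst {A : Ty} : ∀ {σ : ℕ → Ty}, (∀ k, WF (σ k)) →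
    WF A → WF (Ty.subst σ A) := by
  induction A with
  | var n => intro σ hσ _; exact hσ n
  | box A ih => intro σ hσ h; exact ih hσ h
  | arrow A B ihA ihB => intro σ hσ h; exact ⟨ihA hσ h.1, ihB hσ h.2⟩
  | mu A ih =>
    intro σ hσ h
    rw [subst_mu]
    refine ⟨ih ?_ h.1, ?_⟩
    · intro k
      cases k with
      | zero => trivial
      | succ m => exact wf_rename Nat.succ_injective (hσ m)
    · refine proper_subst rfl ?_ h.2
      intro k hk
      cases k with
      | zero => omega
      | succ m => exact not_free_shiftUp_zero (σ m)
/-- Number of `μ`-binders on the tail spine. -/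
def smu : Ty → ℕ
  | .var _ => 0
  | .box A => smu A
  | .arrow _ B => smu B
  | .mu A => smu A + 1

theorem smu_rename (A : Ty) (f : ℕ → ℕ) : smu (Ty.rename f A) = smu A := by
  induction A generalizing f with
  | var j => rfl
  | box A ih => exact ih f
  | arrow A B ihA ihB => exact ihB f
  | mu A ih => simp [rename_mu, smu, ih]

theorem smu_subst (A : Ty) (σ : ℕ → Ty) :
    smu (Ty.subst σ A) =
      smu A + (match tb A with | .inl _ => 0 | .inr (_, j) => smu (σ j)) := by
  induction A generalizing σ with
  | var j => simp [Ty.subst, smu, tb]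
  | box A ih =>
    show smu (Ty.subst σ A) = _
    rw [ih]
    rcases h : tb A with r | ⟨s, j⟩ <;> simp [smu, tb, h]
  | arrow A B ihA ihB => exact ihB σ
  | mu A ih =>
    rw [subst_mu]
    show smu (Ty.subst (slift σ) A) + 1 = _
    rw [ih]
    rcases h : tb A with r | ⟨s, j⟩
    · simp [smu, tb, h]
    · cases j with
      | zero => simp [smu, tb, h, slift]
      | succ m =>
        simp [smu, tb, h, slift, Ty.shiftUp, smu_rename]
        omega

/-- If `A` is proper in `X` and its tail spine reaches the free variable `X`,
then there is a `•` on the spine. -/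
theorem proper_tb {A : Ty} : ∀ {X : ℕ} {s : Bool},
    Proper A X → tb A = .inr (s, X) → s = true := by
  induction A with
  | var n =>
    intro X s h htb
    simp only [tb, Sum.inr.injEq, Prod.mk.injEq] at htb
    exact absurd htb.2 (h : n ≠ X)
  | box A ih =>
    intro X s h htb
    simp only [tb] at htb
    rcases h' : tb A with r | ⟨s', j'⟩ <;> simp only [h'] at htb
    · simp at htb
    · have hh : true = s ∧ j' = X := by simpa using htb
      exact hh.1.symm
  | arrow A B ihA ihB =>
    intro X s h htb
    rcases h with ⟨_, hB⟩ | hTV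
    · exact ihB hB htb
    · rw [isTV_iff] at hTV
      rw [show tb (Ty.arrow A B) = tb B from rfl] at htb
      rw [hTV] at htb; cases htb
  | mu A ih =>
    intro X s h htb
    simp only [tb] at htb
    rcases h' : tb A with r | ⟨s', j'⟩ <;> simp only [h'] at htb
    · cases htb
    · cases j' with
      | zero => cases htb
      | succ m =>
        have hm : s' = s ∧ m = X := by simpa using htb
        rcases h with h | hTV
        · exact ih h (by rw [h', hm.1, hm.2])
        · rw [isTV_iff] at hTV
          simp only [tb, h'] at hTV
          cases hTV

/-- In a well-formed type, a spine-bound tail variable always has a `•` in front. -/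
theorem wf_tb_inl {A : Ty} : ∀ {r : Bool}, WF A → tb A = .inl r → r = true := by
  induction A with
  | var n => intro r _ h; cases h
  | box A ih =>
    intro r hwf h
    simp only [tb] at h
    rcases h' : tb A with r' | ⟨s', j'⟩ <;> simp only [h'] at h
    · exact ih hwf (by rw [h', h])
    · cases h
  | arrow A B ihA ihB => intro r hwf h; exact ihB hwf.2 h
  | mu A ih =>
    intro r hwf h
    simp only [tb] at h
    rcases h' : tb A with r' | ⟨s', j'⟩ <;> simp only [h'] at h
    · exact ih hwf.1 (by rw [h', h])
    · cases j' with
      | zero =>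
        have : s' = r := by simpa using h
        subst this
        exact proper_tb hwf.2 h'
      | succ m => cases h

theorem tfmem_tb {V : Set ℕ} {A : Ty} (h : TFmem V A) :
    ∃ s j, tb A = .inr (s, j) ∧ j ∉ V := by
  induction h with
  | var hX => exact ⟨false, _, rfl, hX⟩
  | box _ ih =>
    obtain ⟨s, j, h1, h2⟩ := ih
    exact ⟨true, j, by simp [tb, h1], h2⟩
  | arrow A _ ih => exact ih
  | mu _ _ ih =>
    obtain ⟨s, j, h1, h2⟩ := ih
    cases j with
    | zero => exact absurd (by simp : (0:ℕ) ∈ {0} ∪ (Nat.succ '' _)) h2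
    | succ m =>
      refine ⟨s, m, by simp [tb, h1], fun hm => h2 ?_⟩
      right; exact ⟨m, hm, rfl⟩

theorem tb_tfmem {A : Ty} : ∀ {V : Set ℕ} {s : Bool} {j : ℕ},
    WF A → tb A = .inr (s, j) → j ∉ V → TFmem V A := by
  induction A with
  | var n =>
    intro V s j _ h hj
    simp only [tb, Sum.inr.injEq, Prod.mk.injEq] at h
    obtain ⟨-, rfl⟩ := h
    exact TFmem.var hj
  | box A ih =>
    intro V s j hwf h hj
    simp only [tb] at h
    rcases h' : tb A with r' | ⟨s', j'⟩ <;> simp only [h'] at h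
    · cases h
    · have hh : true = s ∧ j' = j := by simpa using h
      exact TFmem.box (ih hwf (by rw [h', hh.2]) hj)
  | arrow A B ihA ihB =>
    intro V s j hwf h hj
    exact TFmem.arrow A (ihB hwf.2 h hj)
  | mu A ih =>
    intro V s j hwf h hj
    simp only [tb] at h
    rcases h' : tb A with r' | ⟨s', j'⟩ <;> simp only [h'] at h
    · cases h
    · cases j' with
      | zero => cases h
      | succ m =>
        have hm : s' = s ∧ m = j := by simpa using h
        refine TFmem.mu ⟨hwf.1, hwf.2⟩ (ih hwf.1 (by rw [h', hm.1, hm.2]) ?_)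
        intro hmem
        rcases hmem with hmem | ⟨k, hk, hk2⟩
        · simp at hmem
        · have : k = j := by omega
          exact hj (this ▸ hk)

theorem shape_obs {C : Ty} (h : TFShape C) : ∃ p, obs C = some p := by
  induction h with
  | var X => exact ⟨(0, X), rfl⟩
  | box _ ih => obtain ⟨p, hp⟩ := ih; exact ⟨(p.1 + 1, p.2), by simp [obs, hp]⟩
  | arrow A _ ih => exact ih
theorem obs_openT (C A : Ty) :
    obs (openT C A) =
      (obs C).bind (fun p => match p.2 with
        | 0 => (obs A).map (fun q => (p.1 + q.1, q.2))
        | Nat.succ m => some (p.1, m)) := by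
  show obs (Ty.subst _ C) = _
  rw [obs_subst]
  rcases h : obs C with _ | ⟨n, j⟩
  · rfl
  · cases j with
    | zero => rfl
    | succ m => simp [obs]

theorem proper_obs {C : Ty} (h : Proper C 0) : obs C ≠ some (0, 0) := by
  intro hobs
  rcases htb : tb C with r | ⟨s, j⟩
  · rw [(tb_obs C).1 r htb] at hobs; cases hobs
  · obtain ⟨n, hn, hsn⟩ := (tb_obs C).2 s j htb
    rw [hn] at hobs
    have hnj : n = 0 ∧ j = 0 := by simpa using hobs
    have hs : s = true := proper_tb h (by rw [htb, hnj.2])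
    have := hsn.1 hs
    omega

theorem eq_obs : ∀ {s : Bool} {A B : Ty}, TyEq s A B → obs A = obs B := by
  intro s A B h
  induction h with
  | refl => rfl
  | symm _ ih => exact ih.symm
  | trans _ _ ih1 ih2 => exact ih1.trans ih2
  | boxCongr _ ih => simp only [obs, ih]
  | arrowCongr _ _ ih1 ih2 => exact ih2
  | arrowTop => rfl
  | fix s A =>
    show obs (Ty.mu A) = obs (openT A (Ty.mu A))
    rw [obs_openT]
    rcases h : obs A with _ | ⟨n, j⟩
    · simp [obs, h]
    · cases j with
      | zero => simp [obs, h]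
      | succ m => simp [obs, h]
  | @uniq s A C _ hP ih =>
    rw [obs_openT] at ih
    rcases hC : obs C with _ | ⟨n, j⟩
    · rw [hC] at ih
      simp only [Option.bind] at ih
      simp [obs, hC, ih]
    · rw [hC] at ih
      cases j with
      | zero =>
        simp only [Option.bind] at ih
        have hA : obs A = none := by
          rcases hA : obs A with _ | ⟨n', j'⟩
          · rfl
          · rw [hA] at ih
            simp only [Option.map] at ih
            have : n' = n + n' := by simpa using ih
            have hn0 : n = 0 := by omega
            exact absurd (by rw [hC, hn0]) (proper_obs hP)
        rw [hA]
        simp [obs, hC]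
      | succ m =>
        simp only [Option.bind] at ih
        rw [ih]
        simp [obs, hC]
  | kl A B => rfl

/-- `⊤ ≅ •⊤`. -/
theorem top_box (s : Bool) : TyEq s tyTop (Ty.box tyTop) := TyEq.fix s (Ty.box (Ty.var 0))

theorem wf_top : WF tyTop := ⟨trivial, trivial⟩

theorem openT_slift_top (B : Ty) (σ : ℕ → Ty) (T : Ty) :
    openT (Ty.subst (slift σ) B) T =
      Ty.subst (fun k => match k with | 0 => T | Nat.succ m => σ m) B := by
  show Ty.subst _ (Ty.subst (slift σ) B) = _
  rw [subst_subst]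
  congr 1
  funext k
  cases k with
  | zero => rfl
  | succ m =>
    show Ty.subst _ (Ty.shiftUp (σ m)) = σ m
    rw [Ty.shiftUp, subst_rename]
    exact subst_var_id (σ m)

theorem subst_top_eq : ∀ (N : ℕ) (B : Ty) (σ : ℕ → Ty), smu B ≤ N → WF B →
    ∀ s j, tb B = .inr (s, j) → σ j = tyTop → TyEq false (Ty.subst σ B) tyTop := by
  intro N
  induction N using Nat.strong_induction_on with
  | _ N ihN =>
    intro B
    induction B with
    | var n =>
      intro σ _ _ s j htb hσ
      simp only [tb, Sum.inr.injEq, Prod.mk.injEq] at htb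
      obtain ⟨-, rfl⟩ := htb
      show TyEq false (σ n) tyTop
      rw [hσ]
      exact TyEq.refl false tyTop
    | box B ih =>
      intro σ hsmu hwf s j htb hσ
      simp only [tb] at htb
      rcases h' : tb B with r | ⟨s', j'⟩ <;> simp only [h'] at htb
      · cases htb
      · have hh : true = s ∧ j' = j := by simpa using htb
        have hB := ih σ (by simpa [smu] using hsmu) hwf s' j' (by rw [h', hh.2]) (by rw [hh.2]; exact hσ)
        exact (TyEq.boxCongr hB).trans (top_box false).symm
    | arrow C B ihC ihB =>
      intro σ hsmu hwf s j htb hσ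
      have hB := ihB σ (by simpa [smu] using hsmu) hwf.2 s j htb hσ
      exact (TyEq.arrowCongr (TyEq.refl false _) hB).trans (TyEq.arrowTop false _)
    | mu B ih =>
      intro σ hsmu hwf s j htb hσ
      simp only [tb] at htb
      rcases h' : tb B with r | ⟨s', j'⟩ <;> simp only [h'] at htb
      · cases htb
      · cases j' with
        | zero => cases htb
        | succ m =>
          have hh : s' = s ∧ m = j := by simpa using htb
          rw [subst_mu]
          have hP : Proper (Ty.subst (slift σ) B) 0 := by
            refine proper_subst rfl ?_ hwf.2
            intro k hk
            cases k with
            | zero => omega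
            | succ m' => exact not_free_shiftUp_zero (σ m')
          have hsmu' : smu B < N := by simp only [smu] at hsmu; omega
          have hB : TyEq false
              (Ty.subst (fun k => match k with | 0 => tyTop | Nat.succ m' => σ m') B) tyTop := by
            refine ihN (smu B) hsmu' B _ le_rfl hwf.1 s' (m+1) h' ?_
            show σ m = tyTop
            rw [hh.2]; exact hσ
          refine TyEq.symm (TyEq.uniq ?_ hP)
          rw [openT_slift_top]
          exact hB.symm

theorem tv_eq_top' : ∀ (N : ℕ) (A : Ty), smu A ≤ N → WF A → IsTV A → TyEq false A tyTop := by
  intro N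
  induction N using Nat.strong_induction_on with
  | _ N ihN =>
    intro A
    induction A with
    | var n =>
      intro _ _ hTV
      rw [isTV_iff] at hTV
      simp [tb] at hTV
    | box B ih =>
      intro hsmu hwf hTV
      have hB : IsTV B := by
        rw [isTV_iff] at hTV ⊢
        simp only [tb] at hTV
        rcases h' : tb B with r | p <;> simp only [h'] at hTV
        · rw [hTV]
        · cases hTV
      exact (TyEq.boxCongr (ih hsmu hwf hB)).trans (top_box false).symm
    | arrow C B ihC ihB =>
      intro hsmu hwf hTV
      have hB : IsTV B := by rw [isTV_iff] at hTV ⊢; exact hTV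
      exact (TyEq.arrowCongr (TyEq.refl false C) (ihB hsmu hwf.2 hB)).trans (TyEq.arrowTop false C)
    | mu B ih =>
      intro hsmu hwf hTV
      have hsmu' : smu B < N := by simp only [smu] at hsmu; omega
      have hwfσ : ∀ k, WF ((fun k => match k with | 0 => tyTop | Nat.succ m => Ty.var m) k) := by
        intro k; cases k with
        | zero => exact wf_top
        | succ m => trivial
      have hkey : TyEq false (Ty.subst
          (fun k => match k with | 0 => tyTop | Nat.succ m => Ty.var m) B) tyTop := by
        rw [isTV_iff] at hTV
        simp only [tb] at hTV
        rcases h' : tb B with r | ⟨s', j'⟩ <;> simp only [h'] at hTV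
        · have hr : r = true := by simpa using hTV
          refine ihN (smu B) hsmu' _ ?_ ?_ ?_
          · rw [smu_subst, h']; simp
          · exact wf_subst hwfσ hwf.1
          · rw [isTV_iff, tb_subst, h', hr]
        · cases j' with
          | zero => exact subst_top_eq N B _ (by omega) hwf.1 s' 0 h' rfl
          | succ m => cases hTV
      have h2 : TyEq false tyTop (Ty.mu B) := by
        refine TyEq.uniq ?_ hwf.2
        show TyEq false tyTop (openT B tyTop)
        exact hkey.symm
      exact h2.symm

theorem tv_eq_top {A : Ty} (hwf : WF A) (hTV : IsTV A) : TyEq false A tyTop :=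
  tv_eq_top' (smu A) A le_rfl hwf hTV

theorem tail_finite_of_free : ∀ (N : ℕ) (A : Ty), smu A ≤ N → WF A →
    ∀ s j, tb A = .inr (s, j) → TailFinite A := by
  intro N
  induction N using Nat.strong_induction_on with
  | _ N ihN =>
    intro A
    induction A with
    | var n =>
      intro _ _ s j _
      exact ⟨Ty.var n, TFShape.var n, trivial, TyEq.refl false _⟩
    | box B ih =>
      intro hsmu hwf s j htb
      simp only [tb] at htb
      rcases h' : tb B with r | ⟨s', j'⟩ <;> simp only [h'] at htb
      · cases htb
      · have hh : true = s ∧ j' = j := by simpa using htb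
        obtain ⟨C, h1, h2, h3⟩ := ih hsmu hwf s' j' h'
        exact ⟨Ty.box C, TFShape.box h1, h2, TyEq.boxCongr h3⟩
    | arrow D B ihD ihB =>
      intro hsmu hwf s j htb
      obtain ⟨C, h1, h2, h3⟩ := ihB hsmu hwf.2 s j htb
      exact ⟨Ty.arrow D C, TFShape.arrow D h1, ⟨hwf.1, h2⟩,
        TyEq.arrowCongr (TyEq.refl false D) h3⟩
    | mu B ih =>
      intro hsmu hwf s j htb
      simp only [tb] at htb
      rcases h' : tb B with r | ⟨s', j'⟩ <;> simp only [h'] at htb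
      · cases htb
      · cases j' with
        | zero => cases htb
        | succ m =>
          have hh : s' = s ∧ m = j := by simpa using htb
          have hsmu' : smu B < N := by simp only [smu] at hsmu; omega
          have hwfσ : ∀ k, WF ((fun k => match k with
              | 0 => Ty.mu B | Nat.succ m => Ty.var m) k) := by
            intro k; cases k with
            | zero => exact hwf
            | succ m => trivial
          have hwfU : WF (unfoldMu B) := wf_subst hwfσ hwf.1
          have htbU : tb (unfoldMu B) = .inr (s', j) := by
            show tb (Ty.subst _ B) = _
            rw [tb_subst, h']
            show (match tb (Ty.var m) with
              | .inl r => Sum.inl r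
              | .inr (s2, j2) => Sum.inr (s' || s2, j2)) = _
            simp [tb, hh.2]
          have hsmuU : smu (unfoldMu B) ≤ smu B := by
            show smu (Ty.subst _ B) ≤ _
            rw [smu_subst, h']
            simp [smu]
          obtain ⟨C, h1, h2, h3⟩ := ihN (smu B) hsmu' (unfoldMu B) hsmuU hwfU s' j htbU
          exact ⟨C, h1, h2, (TyEq.fix false B).trans h3⟩

/-- The four characterizations of tail finiteness are equivalent: (a) `A ∈ TF`;
(b) `A` is tail finite; (c) neither `A ≅ ⊤` nor `A ≃ ⊤`; (d) `A` is not a ⊤-variant. -/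
theorem statement6 (A : Ty) (hA : WF A) :
    (TFmem ∅ A ↔ TailFinite A) ∧
      (TailFinite A ↔ (¬ TyEq false A tyTop ∧ ¬ TyEq true A tyTop)) ∧
      ((¬ TyEq false A tyTop ∧ ¬ TyEq true A tyTop) ↔ ¬ IsTV A) := by
  have hTF : ∀ s j, tb A = Sum.inr (s, j) → TailFinite A := fun s j h =>
    tail_finite_of_free (smu A) A le_rfl hA s j h
  have hObsTF : TailFinite A → ∃ p, obs A = some p := by
    rintro ⟨C, h1, h2, h3⟩
    obtain ⟨p, hp⟩ := shape_obs h1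
    exact ⟨p, (eq_obs h3).trans hp⟩
  have hTVofNone : obs A = none → IsTV A := by
    intro h
    rcases htb : tb A with r | ⟨s, j⟩
    · rw [isTV_iff, htb, wf_tb_inl hA htb]
    · obtain ⟨n, hn, -⟩ := (tb_obs A).2 s j htb
      rw [h] at hn; cases hn
  have hEqNone : ∀ s', TyEq s' A tyTop → obs A = none := fun s' h => (eq_obs h).trans obs_top
  refine ⟨⟨?_, ?_⟩, ⟨?_, ?_⟩, ⟨?_, ?_⟩⟩
  · intro h
    obtain ⟨s, j, h1, -⟩ := tfmem_tb h
    exact hTF s j h1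
  · intro h
    obtain ⟨p, hp⟩ := hObsTF h
    rcases htb : tb A with r | ⟨s, j⟩
    · rw [(tb_obs A).1 r htb] at hp; cases hp
    · exact tb_tfmem hA htb (Set.notMem_empty j)
  · intro h
    obtain ⟨p, hp⟩ := hObsTF h
    constructor <;> intro he <;> rw [hEqNone _ he] at hp <;> cases hp
  · intro h
    rcases htb : tb A with r | ⟨s, j⟩
    · exact absurd (tv_eq_top hA (by rw [isTV_iff, htb, wf_tb_inl hA htb])) h.1
    · exact hTF s j htb
  · exact fun h hTV => h.1 (tv_eq_top hA hTV)
  · intro h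
    constructor <;> intro he <;> exact h (hTVofNone (hEqNone _ he))


end LambdaA
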